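/- Let $X$ and $Y$ be topological spaces and $h \colon X \times Y \to \mathbb{R}$ a separately continuous function. If $h = \sum_{i=1}^n f_i \otimes g_i$ for some functions $f_i \colon X \to \mathbb{R}$, $g_i \colon Y \to \mathbb{R}$, then there exist continuous functions $\bar{f}_i \in C(X)$, $\bar{g}_i \in C(Y)$, $i = 1, \dots, m$, with $h = \sum_{i=1}^m \bar{f}_i \otimes \bar{g}_i$. -/

import Mathlib

theorem stmt11 {X Y : Type*} [TopologicalSpace X] [TopologicalSpace Y]
    (h : X × Y → ℝ)
    (hvc : ∀ x : X, Continuous fun y => h (x, y))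
    (hhc : ∀ y : Y, Continuous fun x => h (x, y))
    (n : ℕ) (f : Fin n → X → ℝ) (g : Fin n → Y → ℝ)
    (hsum : ∀ x y, h (x, y) = ∑ i, f i x * g i y) :
    ∃ (m : ℕ) (F : Fin m → X → ℝ) (G : Fin m → Y → ℝ),
      (∀ i, Continuous (F i)) ∧ (∀ i, Continuous (G i)) ∧
      ∀ x y, h (x, y) = ∑ i, F i x * G i y := by
  classical
  set V : Submodule ℝ (Y → ℝ) :=
    Submodule.span ℝ (Set.range fun x => fun y => h (x, y)) with hV
  have hle : V ≤ Submodule.span ℝ (Set.range g) := by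
    rw [hV, Submodule.span_le]
    rintro _ ⟨x, rfl⟩
    have : (fun y => h (x, y)) = ∑ i, f i x • g i := by
      funext y; simp [hsum x y, mul_comm]
    show (fun y => h (x, y)) ∈ (Submodule.span ℝ (Set.range g) : Set (Y → ℝ))
    rw [this]
    exact Submodule.sum_mem _ fun i _ =>
      Submodule.smul_mem _ _ (Submodule.subset_span ⟨i, rfl⟩)
  haveI : FiniteDimensional ℝ (Submodule.span ℝ (Set.range g)) :=
    FiniteDimensional.span_of_finite ℝ (Set.finite_range g)
  haveI : FiniteDimensional ℝ V := Submodule.finiteDimensional_of_le hle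
  -- every element of V is continuous
  have hcont : ∀ v ∈ V, Continuous v := by
    intro v hv
    induction hv using Submodule.span_induction with
    | mem v hv => obtain ⟨x, rfl⟩ := hv; exact hvc x
    | zero => exact continuous_const
    | add v w _ _ hv hw => exact hv.add hw
    | smul c v _ hv => exact hv.const_smul c
  have hmem : ∀ x, (fun y => h (x, y)) ∈ V := fun x =>
    Submodule.subset_span ⟨x, rfl⟩
  set sec : X → V := fun x => ⟨fun y => h (x, y), hmem x⟩ with hsec
  -- evaluations span the dual of V
  set ev : Y → Module.Dual ℝ V := fun y => (LinearMap.proj y).comp V.subtype with hev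
  have hspan : Submodule.span ℝ (Set.range ev) = ⊤ := by
    have hco : (Submodule.span ℝ (Set.range ev)).dualCoannihilator = ⊥ := by
      rw [eq_bot_iff]
      intro v hv
      rw [Submodule.mem_dualCoannihilator] at hv
      have : ∀ y, (v : Y → ℝ) y = 0 := fun y =>
        hv (ev y) (Submodule.subset_span ⟨y, rfl⟩)
      rw [Submodule.mem_bot]
      ext y
      exact this y
    have := Subspace.dualCoannihilator_dualAnnihilator_eq
      (W := Submodule.span ℝ (Set.range ev))
    rw [hco, Submodule.dualAnnihilator_bot] at this
    exact this.symm
  -- coordinate functionals are continuous along sections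
  have hcoord : ∀ φ : Module.Dual ℝ V, Continuous fun x => φ (sec x) := by
    intro φ
    have hφ : φ ∈ Submodule.span ℝ (Set.range ev) := hspan ▸ Submodule.mem_top
    induction hφ using Submodule.span_induction with
    | mem φ hφ =>
        obtain ⟨y, rfl⟩ := hφ
        simpa [hev, hsec] using hhc y
    | zero => simpa using continuous_const
    | add φ ψ _ _ hφ hψ => have h' : Continuous fun x => φ (sec x) + ψ (sec x) := hφ.add hψ; simpa using h'
    | smul c φ _ hφ => have h' : Continuous fun x => c • φ (sec x) := hφ.const_smul c; simpa using h'
  set m := Module.finrank ℝ V with hm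
  set b : Module.Basis (Fin m) ℝ V := Module.finBasis ℝ V
  refine ⟨m, fun j x => b.repr (sec x) j, fun j => (b j : Y → ℝ),
    fun j => ?_, fun j => hcont _ (b j).2, fun x y => ?_⟩
  · exact hcoord (b.coord j)
  · have := b.sum_repr (sec x)
    have h2 : ((∑ j, b.repr (sec x) j • b j : V) : Y → ℝ) y = h (x, y) := by
      rw [this]
    rw [← h2]
    push_cast [Submodule.coe_sum]
    simp [Finset.sum_apply, smul_eq_mul]
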